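/- arXiv:2104.02996 — 16 statements merged into one kernel-verified Lean document; each statement's English description precedes it below -/
import Mathlib

section
/- Let τ be a nonempty set, p ∈ [1,∞), and φ : τ → τ. The generalized shift σ_φ maps ℓ^p(τ) into ℓ^p(τ) if and only if there exists N ∈ ℕ such that for every α ∈ τ the fiber φ⁻¹({α}) has at most N elements. -/
open scoped ENNReal

/-- For a nonempty set `τ`, `p ∈ [1,∞)` and a self-map `φ : τ → τ`, the generalized shift
`σ_φ : (x_α)_α ↦ (x_{φ α})_α` maps `ℓ^p(τ)` into `ℓ^p(τ)` if and only if there is `N ∈ ℕ`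
bounding the cardinality of every fiber `φ⁻¹({α})`. -/
theorem stmt_1 (τ : Type*) [Nonempty τ] (p : ℝ≥0∞) (hp : 1 ≤ p) (hp' : p ≠ ∞) (φ : τ → τ) :
    (∀ x : τ → ℂ, Memℓp x p → Memℓp (fun α => x (φ α)) p) ↔
      ∃ N : ℕ, ∀ α : τ, (φ ⁻¹' {α}).encard ≤ N := by
  classical
  have hp0 : p ≠ 0 := (lt_of_lt_of_le zero_lt_one hp).ne'
  have hr : 0 < p.toReal := ENNReal.toReal_pos hp0 hp'
  set r := p.toReal with hrdef
  constructor
  · -- hard direction: maps ℓ^p into ℓ^p ⇒ fibers uniformly bounded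
    intro H
    by_contra hcon
    push_neg at hcon
    -- hcon : ∀ N : ℕ, ∃ α, (N : ℕ∞) < (φ ⁻¹' {α}).encard
    by_cases hinf : ∃ β, (φ ⁻¹' {β}).Infinite
    · -- some fiber is infinite: indicator function gives contradiction
      obtain ⟨β, hβ⟩ := hinf
      set x : τ → ℂ := fun α => if α = β then 1 else 0 with hxdef
      have hxmem : Memℓp x p := by
        apply memℓp_gen
        apply summable_of_ne_finset_zero (s := {β})
        intro a ha
        simp only [Finset.mem_singleton] at ha
        simp [hxdef, if_neg ha, Real.zero_rpow hr.ne', Real.zero_rpow (x := p.toReal) hr.ne']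
      have hsum : Summable fun α => ‖x (φ α)‖ ^ r := (H x hxmem).summable hr
      have hsub : Summable fun a : (φ ⁻¹' {β}) => ‖x (φ (a : τ))‖ ^ r :=
        hsum.subtype _
      have : Summable fun _ : (φ ⁻¹' {β}) => (1 : ℝ) := by
        apply hsub.congr
        rintro ⟨a, ha⟩
        have : φ a = β := ha
        simp [hxdef, this, Real.one_rpow]
      have hfin : (Set.univ : Set (φ ⁻¹' {β})).Finite :=
        Set.Finite.of_summable_const zero_lt_one this
      rw [Set.finite_univ_iff] at hfin
      exact hβ ((Set.finite_coe_iff.mp hfin))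
    · -- all fibers finite but of unbounded cardinality
      push_neg at hinf
      set F : τ → ℕ := fun β => (φ ⁻¹' {β}).ncard with hFdef
      have hB : ∀ N : ℕ, ∃ β, N < F β := by
        intro N
        obtain ⟨β, hβ⟩ := hcon N
        refine ⟨β, ?_⟩
        have hfin := hinf β
        have := hfin.encard_eq_coe_toFinset_card
        rw [this] at hβ
        have hF : F β = (hfin.toFinset).card := Set.ncard_eq_toFinset_card _ hfin
        rw [hF]
        exact_mod_cast hβ
      choose G hG using hB
      -- recursively build a sequence with rapidly growing fibers
      set g : ℕ → τ := fun n => Nat.rec (G (4 ^ 0)) (fun n ih => G (max (4 ^ (n + 1)) (F ih))) n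
        with hgdef
      have hg1 : ∀ n, 4 ^ n < F (g n) := by
        intro n
        cases n with
        | zero => exact hG (4 ^ 0)
        | succ m =>
          have : g (m + 1) = G (max (4 ^ (m + 1)) (F (g m))) := rfl
          rw [this]
          exact lt_of_le_of_lt (le_max_left _ _) (hG _)
      have hg2 : ∀ n, F (g n) < F (g (n + 1)) := by
        intro n
        have : g (n + 1) = G (max (4 ^ (n + 1)) (F (g n))) := rfl
        rw [this]
        exact lt_of_le_of_lt (le_max_right _ _) (hG _)
      have hmono : StrictMono (fun n => F (g n)) := strictMono_nat_of_lt_succ hg2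
      have ginj : Function.Injective g := by
        intro a b hab
        exact hmono.injective (by simp [hab])
      -- the ℓ^p witness
      set x : τ → ℂ := fun β =>
        if h : ∃ n, g n = β then (((2 : ℝ) ^ (-(h.choose : ℝ) / r) : ℝ) : ℂ) else 0 with hxdef
      have hx : ∀ n, x (g n) = (((2 : ℝ) ^ (-(n : ℝ) / r) : ℝ) : ℂ) := by
        intro n
        have hex : ∃ m, g m = g n := ⟨n, rfl⟩
        have : hex.choose = n := ginj hex.choose_spec
        simp only [hxdef, dif_pos hex, this]
      have hxnorm : ∀ n, ‖x (g n)‖ ^ r = (2 : ℝ) ^ (-(n : ℝ)) := by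
        intro n
        rw [hx n]
        rw [Complex.norm_real, Real.norm_eq_abs,
          abs_of_nonneg (Real.rpow_nonneg (by norm_num) _),
          ← Real.rpow_mul (by norm_num : (0:ℝ) ≤ 2), div_mul_cancel₀ _ hr.ne']
      have hxmem : Memℓp x p := by
        apply memℓp_gen
        rw [← Function.Injective.summable_iff ginj (f := fun β => ‖x β‖ ^ r)]
        · have : (fun n => ‖x (g n)‖ ^ r) = fun n : ℕ => (2⁻¹ : ℝ) ^ n := by
            funext n
            rw [hxnorm n, Real.rpow_neg (by norm_num), Real.rpow_natCast, inv_pow]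
          rw [show ((fun β => ‖x β‖ ^ r) ∘ g) = fun n => ‖x (g n)‖ ^ r from rfl, this]
          exact summable_geometric_of_lt_one (by norm_num) (by norm_num)
        · intro b hb
          have : ¬ ∃ n, g n = b := by
            intro ⟨n, hn⟩; exact hb ⟨n, hn⟩
          simp [hxdef, dif_neg this, Real.zero_rpow hr.ne', Real.zero_rpow (x := p.toReal) hr.ne']
      have hsum : Summable fun α => ‖x (φ α)‖ ^ r := (H x hxmem).summable hr
      set T := ∑' α, ‖x (φ α)‖ ^ r with hT
      have hbound : ∀ n : ℕ, (2 : ℝ) ^ n ≤ T := by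
        intro n
        have hfin := hinf (g n)
        have hsumfin : ∑ a ∈ hfin.toFinset, ‖x (φ a)‖ ^ r
            = (F (g n) : ℝ) * (2 : ℝ) ^ (-(n : ℝ)) := by
          rw [Finset.sum_congr rfl (fun a ha => ?_), Finset.sum_const,
            nsmul_eq_mul]
          · congr 1
            exact_mod_cast (Set.ncard_eq_toFinset_card _ hfin).symm
          · have : φ a = g n := by
              have := hfin.mem_toFinset.mp ha
              exact this
            rw [this, hxnorm n]
        have hle : ∑ a ∈ hfin.toFinset, ‖x (φ a)‖ ^ r ≤ T :=
          Summable.sum_le_tsum _ (fun b _ => Real.rpow_nonneg (norm_nonneg _) _) hsum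
        rw [hsumfin] at hle
        refine le_trans ?_ hle
        have h4 : ((4 : ℝ) ^ n) ≤ (F (g n) : ℝ) := by
          exact_mod_cast (hg1 n).le
        have h2 : (0 : ℝ) < (2:ℝ) ^ (-(n : ℝ)) := Real.rpow_pos_of_pos (by norm_num) _
        calc (2 : ℝ) ^ n = (4 : ℝ) ^ n * (2 : ℝ) ^ (-(n : ℝ)) := by
              rw [show (4:ℝ) = 2 * 2 by norm_num, mul_pow,
                Real.rpow_neg (by norm_num), Real.rpow_natCast]
              field_simp
          _ ≤ (F (g n) : ℝ) * (2 : ℝ) ^ (-(n : ℝ)) :=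
              mul_le_mul_of_nonneg_right h4 h2.le
      obtain ⟨n, hn⟩ := pow_unbounded_of_one_lt T (one_lt_two (α := ℝ))
      exact absurd (hbound n) (not_le.mpr hn)
  · -- easy direction: bounded fibers ⇒ maps ℓ^p into ℓ^p
    rintro ⟨N, hN⟩ x hx
    have hsx : Summable fun i => ‖x i‖ ^ r := hx.summable hr
    set T := ∑' i, ‖x i‖ ^ r with hT
    apply memℓp_gen' (C := N * T)
    intro s
    have key : ∑ a ∈ s, ‖x (φ a)‖ ^ r
        = ∑ b ∈ s.image φ, (s.filter fun a => φ a = b).card • (‖x b‖ ^ r) :=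
      Finset.sum_comp (fun b => ‖x b‖ ^ r) φ
    rw [key]
    have step1 : ∑ b ∈ s.image φ, (s.filter fun a => φ a = b).card • (‖x b‖ ^ r)
        ≤ ∑ b ∈ s.image φ, (N : ℝ) * (‖x b‖ ^ r) := by
      apply Finset.sum_le_sum
      intro b _
      rw [nsmul_eq_mul]
      apply mul_le_mul_of_nonneg_right _ (Real.rpow_nonneg (norm_nonneg _) _)
      have hsub : ((s.filter fun a => φ a = b : Finset τ) : Set τ) ⊆ φ ⁻¹' {b} := by
        intro a ha
        simp only [Finset.coe_filter, Set.mem_setOf_eq] at ha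
        exact ha.2
      have := (Set.encard_mono hsub).trans (hN b)
      rw [Set.encard_coe_eq_coe_finsetCard] at this
      exact_mod_cast this
    refine step1.trans ?_
    rw [← Finset.mul_sum]
    apply mul_le_mul_of_nonneg_left _ (by positivity)
    exact Summable.sum_le_tsum _ (fun b _ => Real.rpow_nonneg (norm_nonneg _) _) hsx
end

section
/- Let τ be a nonempty set, p ∈ [1,∞), and φ : τ → τ such that there exists N ∈ ℕ with card(φ⁻¹({α})) ≤ N for all α ∈ τ. Then the restriction σ_φ↾ℓ^p(τ) : ℓ^p(τ) → ℓ^p(τ) is a continuous (bounded) linear operator. -/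
open scoped ENNReal NNReal

lemma tsum_comp_le_aux {τ : Type*} (φ : τ → τ) (N : ℕ)
    (hφ : ∀ α : τ, (φ ⁻¹' {α}).encard ≤ N) (g : τ → ℝ≥0∞) :
    ∑' α, g (φ α) ≤ N * ∑' β, g β := by
  rw [← ENNReal.tsum_fiberwise (fun α => g (φ α)) φ]
  calc ∑' β, ∑' (α : φ ⁻¹' {β}), g (φ (α : τ))
      ≤ ∑' β, (N : ℝ≥0∞) * g β := by
        refine ENNReal.tsum_le_tsum fun β => ?_
        have h1 : ∑' (α : φ ⁻¹' {β}), g (φ (α : τ)) = ∑' (_ : φ ⁻¹' {β}), g β := by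
          refine tsum_congr fun a => ?_
          have := a.2
          simp only [Set.mem_preimage, Set.mem_singleton_iff] at this
          rw [this]
        rw [h1, ENNReal.tsum_set_const]
        refine mul_le_mul_left ?_ _
        have := hφ β
        calc ((φ ⁻¹' {β}).encard : ℝ≥0∞) ≤ ((N : ℕ∞) : ℝ≥0∞) :=
              ENat.toENNReal_le.mpr this
          _ = (N : ℝ≥0∞) := by simp
    _ = N * ∑' β, g β := ENNReal.tsum_mul_left

/-- If `φ : τ → τ` has fibers of cardinality at most `N`, then the restriction of the
generalized shift `σ_φ` to `ℓ^p(τ)` (for `p ∈ [1,∞)`) is a continuous linear operator: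
there is a continuous linear map `S : lp → lp` with `(S x) α = x (φ α)`. -/
theorem stmt_2 (τ : Type*) [Nonempty τ] (p : ℝ≥0∞) [Fact (1 ≤ p)] (hp' : p ≠ ∞)
    (φ : τ → τ) (N : ℕ) (hφ : ∀ α : τ, (φ ⁻¹' {α}).encard ≤ N) :
    ∃ S : lp (fun _ : τ => ℂ) p →L[ℂ] lp (fun _ : τ => ℂ) p,
      ∀ x : lp (fun _ : τ => ℂ) p, ∀ α : τ, S x α = x (φ α) := by
  have hp1 : (1 : ℝ≥0∞) ≤ p := Fact.out
  have hp0 : p ≠ 0 := by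
    intro h; rw [h] at hp1; exact absurd hp1 (by simp)
  have hpt : 0 < p.toReal := ENNReal.toReal_pos hp0 hp'
  set pt := p.toReal with hptdef
  -- ENNReal-valued summand
  have hcoe : ∀ (y : lp (fun _ : τ => ℂ) p) (β : τ),
      ((‖y β‖₊ ^ pt : ℝ≥0) : ℝ) = ‖y β‖ ^ pt := by
    intro y β
    simp [NNReal.coe_rpow]
  have hsumNN : ∀ y : lp (fun _ : τ => ℂ) p, Summable fun β => ‖y β‖₊ ^ pt := by
    intro y
    rw [← NNReal.summable_coe]
    simp only [hcoe]
    exact (lp.memℓp y).summable hpt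
  have hfin : ∀ y : lp (fun _ : τ => ℂ) p,
      (∑' β, ((‖y β‖₊ ^ pt : ℝ≥0) : ℝ≥0∞)) ≠ ∞ := fun y =>
    ENNReal.tsum_coe_ne_top_iff_summable.mpr (hsumNN y)
  have hkey : ∀ y : lp (fun _ : τ => ℂ) p,
      (∑' α, ((‖y (φ α)‖₊ ^ pt : ℝ≥0) : ℝ≥0∞)) ≤ N * ∑' β, ((‖y β‖₊ ^ pt : ℝ≥0) : ℝ≥0∞) :=
    fun y => tsum_comp_le_aux φ N hφ (fun β => ((‖y β‖₊ ^ pt : ℝ≥0) : ℝ≥0∞))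
  have hRHSfin : ∀ y : lp (fun _ : τ => ℂ) p,
      ((N : ℝ≥0∞) * ∑' β, ((‖y β‖₊ ^ pt : ℝ≥0) : ℝ≥0∞)) ≠ ∞ := by
    intro y
    exact ENNReal.mul_ne_top (by simp) (hfin y)
  have hmem : ∀ y : lp (fun _ : τ => ℂ) p, Memℓp (fun α => y (φ α)) p := by
    intro y
    apply memℓp_gen
    have hs : Summable fun α => ‖y (φ α)‖₊ ^ pt := by
      apply ENNReal.tsum_coe_ne_top_iff_summable.mp
      exact ne_top_of_le_ne_top (hRHSfin y) (hkey y)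
    rw [← NNReal.summable_coe] at hs
    simpa only [hcoe] using hs
  -- the linear map
  let L : lp (fun _ : τ => ℂ) p →ₗ[ℂ] lp (fun _ : τ => ℂ) p :=
    { toFun := fun y => ⟨fun α => y (φ α), hmem y⟩
      map_add' := by
        intro y z
        ext α
        simp [lp.coeFn_add]
        rfl
      map_smul' := by
        intro c y
        ext α
        simp [lp.coeFn_smul] }
  have hLapp : ∀ (y : lp (fun _ : τ => ℂ) p) (α : τ), (L y : ∀ _ : τ, ℂ) α = y (φ α) :=
    fun y α => rfl
  -- the bound
  have hbound : ∀ y : lp (fun _ : τ => ℂ) p, ‖L y‖ ≤ (N : ℝ) ^ (1 / pt) * ‖y‖ := by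
    intro y
    have hC : (0 : ℝ) ≤ (N : ℝ) ^ (1 / pt) := Real.rpow_nonneg (by positivity) _
    refine lp.norm_le_of_tsum_le hpt (by positivity) ?_
    have hrpow : ((N : ℝ) ^ (1 / pt) * ‖y‖) ^ pt = (N : ℝ) * ‖y‖ ^ pt := by
      rw [Real.mul_rpow hC (norm_nonneg _), ← Real.rpow_mul (by positivity : (0:ℝ) ≤ N),
        one_div, inv_mul_cancel₀ hpt.ne', Real.rpow_one]
    rw [hrpow, lp.norm_rpow_eq_tsum hpt]
    -- go through ENNReal
    have h1 : (∑' α, ((‖y (φ α)‖₊ ^ pt : ℝ≥0) : ℝ≥0∞)).toReal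
        = ∑' α, ‖(L y : ∀ _ : τ, ℂ) α‖ ^ pt := by
      rw [ENNReal.tsum_toReal_eq (fun _ => ENNReal.coe_ne_top)]
      refine tsum_congr fun α => ?_
      rw [hLapp]
      simp [hcoe]
    have h2 : ((N : ℝ≥0∞) * ∑' β, ((‖y β‖₊ ^ pt : ℝ≥0) : ℝ≥0∞)).toReal
        = (N : ℝ) * ∑' β, ‖y β‖ ^ pt := by
      rw [ENNReal.toReal_mul, ENNReal.tsum_toReal_eq (fun _ => ENNReal.coe_ne_top)]
      simp only [hcoe]
      simp
    calc ∑' α, ‖(L y : ∀ _ : τ, ℂ) α‖ ^ pt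
        = (∑' α, ((‖y (φ α)‖₊ ^ pt : ℝ≥0) : ℝ≥0∞)).toReal := h1.symm
      _ ≤ ((N : ℝ≥0∞) * ∑' β, ((‖y β‖₊ ^ pt : ℝ≥0) : ℝ≥0∞)).toReal :=
          ENNReal.toReal_mono (hRHSfin y) (hkey y)
      _ = (N : ℝ) * ∑' β, ‖y β‖ ^ pt := h2
  exact ⟨L.mkContinuous ((N : ℝ) ^ (1 / pt)) hbound, fun y α => rfl⟩
end

section
/- Let τ be a nonempty set, p ∈ [1,∞], and φ : τ → τ such that there exists N ∈ ℕ with card(φ⁻¹({α})) ≤ N for all α ∈ τ. Let ψ, λ : ℓ^p(τ) → ℓ^p(τ) be linear maps such that σ_φ↾ℓ^p(τ) is a (ψ,λ)-derivation, i.e., σ_φ(xy) = σ_φ(x)·ψ(y) + λ(x)·σ_φ(y) for all x, y ∈ ℓ^p(τ) (products taken pointwise). Then for all α, β ∈ τ: if φ(α) ≠ β then the α-th coordinate of ψ(w^β) and the α-th coordinate of λ(w^β) are both 0, and if φ(α) = β then π_α(ψ(w^β)) + π_α(λ(w^β)) = 1. -/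
open scoped ENNReal

/-- Lemma: if `σ_φ↾ℓ^p(τ)` is a `(ψ,λ)`-derivation (where `ψ, λ` are linear), then for
the standard "unit vectors" `w^β` we have: `π_α(ψ(w^β)) = π_α(λ(w^β)) = 0` whenever
`φ α ≠ β`, and `π_α(ψ(w^β)) + π_α(λ(w^β)) = 1` whenever `φ α = β`. -/
theorem stmt_4 (τ : Type*) [DecidableEq τ] [Nonempty τ] (p : ℝ≥0∞) [Fact (1 ≤ p)]
    (φ : τ → τ) (N : ℕ) (hφ : ∀ α : τ, (φ ⁻¹' {α}).encard ≤ N)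
    (S : lp (fun _ : τ => ℂ) p → lp (fun _ : τ => ℂ) p)
    (hS : ∀ x : lp (fun _ : τ => ℂ) p, ∀ α : τ, S x α = x (φ α))
    (ψ lam : lp (fun _ : τ => ℂ) p →ₗ[ℂ] lp (fun _ : τ => ℂ) p)
    (hder : ∀ x y z : lp (fun _ : τ => ℂ) p, (⇑z = ⇑x * ⇑y) →
      ⇑(S z) = ⇑(S x) * ⇑(ψ y) + ⇑(lam x) * ⇑(S y))
    (w : τ → lp (fun _ : τ => ℂ) p)
    (hw : ∀ β α : τ, w β α = if α = β then (1 : ℂ) else 0) :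
    ∀ α β : τ,
      (φ α ≠ β → ψ (w β) α = 0 ∧ lam (w β) α = 0) ∧
      (φ α = β → ψ (w β) α + lam (w β) α = 1) := by
  intro α β
  constructor
  · intro hne
    constructor
    · have h := hder (w (φ α)) (w β) 0 (by
        funext γ
        simp only [lp.coeFn_zero, Pi.zero_apply, Pi.mul_apply, hw]
        by_cases h2 : γ = β
        · rw [if_neg (fun h1 : γ = φ α => hne (h1 ▸ h2 : φ α = β)), zero_mul]
        · rw [if_neg h2, mul_zero])
      have h2 := congrFun h α
      simp only [Pi.add_apply, Pi.mul_apply, hS, hw, lp.coeFn_zero, Pi.zero_apply,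
        eq_self_iff_true, if_true, if_neg hne, one_mul, mul_zero, add_zero] at h2
      exact h2.symm
    · have h := hder (w β) (w (φ α)) 0 (by
        funext γ
        simp only [lp.coeFn_zero, Pi.zero_apply, Pi.mul_apply, hw]
        by_cases h2 : γ = β
        · rw [if_neg (fun h1 : γ = φ α => hne (h1 ▸ h2 : φ α = β)), mul_zero]
        · rw [if_neg h2, zero_mul])
      have h2 := congrFun h α
      simp only [Pi.add_apply, Pi.mul_apply, hS, hw, lp.coeFn_zero, Pi.zero_apply,
        eq_self_iff_true, if_true, if_neg hne, zero_mul, mul_one, zero_add] at h2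
      exact h2.symm
  · intro heq
    have h := hder (w β) (w β) (w β) (by
      funext γ
      simp only [Pi.mul_apply, hw]
      split <;> simp)
    have h2 := congrFun h α
    simp only [Pi.add_apply, Pi.mul_apply, hS, hw, heq, eq_self_iff_true, if_true,
      one_mul, mul_one] at h2
    exact h2.symm
end

section
/- Let τ be a nonempty set, p ∈ [1,∞], and φ : τ → τ such that there exists N ∈ ℕ with card(φ⁻¹({α})) ≤ N for all α ∈ τ. Let ψ, λ : ℓ^p(τ) → ℓ^p(τ) be continuous linear operators. Then σ_φ↾ℓ^p(τ) is a (ψ,λ)-derivation, i.e., σ_φ(xy) = σ_φ(x)·ψ(y) + λ(x)·σ_φ(y) for all x, y ∈ ℓ^p(τ), if and only if there exists r = (r_α)_{α∈τ} ∈ ℂ^τ such that ψ((x_α)_{α∈τ}) = (r_α x_{φ(α)})_{α∈τ} and λ((x_α)_{α∈τ}) = ((1 − r_α) x_{φ(α)})_{α∈τ} for all (x_α)_{α∈τ} ∈ ℓ^p(τ). -/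
open scoped ENNReal

/-- Theorem: for continuous linear operators `ψ, λ` on `ℓ^p(τ)`, the generalized shift
`σ_φ↾ℓ^p(τ)` is a `(ψ,λ)`-derivation iff there is `r ∈ ℂ^τ` with
`ψ((x_α)_α) = (r_α x_{φ α})_α` and `λ((x_α)_α) = ((1 - r_α) x_{φ α})_α`. -/
theorem stmt_5 (τ : Type*) [Nonempty τ] (p : ℝ≥0∞) [Fact (1 ≤ p)]
    (φ : τ → τ) (N : ℕ) (hφ : ∀ α : τ, (φ ⁻¹' {α}).encard ≤ N)
    (S : lp (fun _ : τ => ℂ) p → lp (fun _ : τ => ℂ) p)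
    (hS : ∀ x : lp (fun _ : τ => ℂ) p, ∀ α : τ, S x α = x (φ α))
    (ψ lam : lp (fun _ : τ => ℂ) p →L[ℂ] lp (fun _ : τ => ℂ) p) :
    (∀ x y z : lp (fun _ : τ => ℂ) p, (⇑z = ⇑x * ⇑y) →
        ⇑(S z) = ⇑(S x) * ⇑(ψ y) + ⇑(lam x) * ⇑(S y)) ↔
      ∃ r : τ → ℂ, ∀ x : lp (fun _ : τ => ℂ) p, ∀ α : τ,
        ψ x α = r α * x (φ α) ∧ lam x α = (1 - r α) * x (φ α) := by
  classical
  constructor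
  · intro h
    set e : τ → lp (fun _ : τ => ℂ) p := fun β => lp.single p β 1 with he
    have hecoe : ∀ β γ, e β γ = if γ = β then 1 else 0 := by
      intro β γ
      by_cases hg : γ = β
      · subst hg; simp [he, lp.single_apply_self]
      · simp [he, lp.single_apply_ne p β _ hg, hg]
    have hprod : ∀ (x : lp (fun _ : τ => ℂ) p) (β : τ),
        ⇑(x β • e β) = ⇑x * ⇑(e β) := by
      intro x β
      funext γ
      have : (x β • e β) γ = x β * e β γ := by
        rw [lp.coeFn_smul]; simp [Pi.smul_apply, smul_eq_mul]
      rw [this]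
      simp only [Pi.mul_apply, hecoe]
      by_cases hg : γ = β
      · subst hg; simp
      · simp [hg]
    refine ⟨fun α => ψ (e (φ α)) α, ?_⟩
    intro x α
    set β := φ α with hβ
    have hzval : (x β • e β) β = x β := by
      rw [lp.coeFn_smul]; simp [Pi.smul_apply, smul_eq_mul, hecoe]
    have hprod' : ⇑(x β • e β) = ⇑(e β) * ⇑x := by
      rw [hprod]; exact mul_comm _ _
    have heself : e β β = 1 := by simp [hecoe]
    have hee : ⇑(e β) = ⇑(e β) * ⇑(e β) := by
      funext γ; simp only [Pi.mul_apply, hecoe]; by_cases hg : γ = β <;> simp [hg]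
    have h1 := congrFun (h x (e β) (x β • e β) (hprod x β)) α
    have h2 := congrFun (h (e β) x (x β • e β) hprod') α
    have h3 := congrFun (h (e β) (e β) (e β) hee) α
    simp only [Pi.add_apply, Pi.mul_apply, hS, ← hβ, hzval, heself] at h1 h2 h3
    -- h1 : x β = x β * ψ (e β) α + lam x α * 1
    -- h2 : x β = 1 * ψ x α + lam (e β) α * x β
    -- h3 : 1 = 1 * ψ (e β) α + lam (e β) α * 1
    constructor
    · have : ψ x α = (1 - lam (e β) α) * x β := by linear_combination -h2
      rw [show (fun α => ψ (e (φ α)) α) α = ψ (e β) α from rfl]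
      have hr : ψ (e β) α = 1 - lam (e β) α := by linear_combination -h3
      rw [this, hr]
    · have : lam x α = (1 - ψ (e β) α) * x β := by linear_combination -h1
      exact this
  · rintro ⟨r, hr⟩ x y z hz
    funext α
    have hzα : z (φ α) = x (φ α) * y (φ α) := by
      have := congrFun hz (φ α); simpa using this
    simp only [Pi.add_apply, Pi.mul_apply, hS, hzα, (hr y α).1, (hr x α).2]
    ring
end

section
/- Let τ be a nonempty set, p ∈ [1,∞], and φ : τ → τ such that there exists N ∈ ℕ with card(φ⁻¹({α})) ≤ N for all α ∈ τ. Let ψ : ℓ^p(τ) → ℓ^p(τ) be a linear map such that σ_φ↾ℓ^p(τ) is a ψ-derivation, i.e., σ_φ(xy) = σ_φ(x)·ψ(y) + ψ(x)·σ_φ(y) for all x, y ∈ ℓ^p(τ). Then ψ(w^β) = (1/2)·σ_φ(w^β) for every β ∈ τ. -/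
open scoped ENNReal

/-- Corollary: if the generalized shift `σ_φ↾ℓ^p(τ)` is a `ψ`-derivation for a linear map
`ψ`, then `ψ(w^β) = (1/2) σ_φ(w^β)` for every `β`. -/
theorem stmt_6 (τ : Type*) [Nonempty τ] [DecidableEq τ] (p : ℝ≥0∞) [Fact (1 ≤ p)]
    (φ : τ → τ) (N : ℕ) (hφ : ∀ α : τ, (φ ⁻¹' {α}).encard ≤ N)
    (S : lp (fun _ : τ => ℂ) p → lp (fun _ : τ => ℂ) p)
    (hS : ∀ x : lp (fun _ : τ => ℂ) p, ∀ α : τ, S x α = x (φ α))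
    (ψ : lp (fun _ : τ => ℂ) p →ₗ[ℂ] lp (fun _ : τ => ℂ) p)
    (hder : ∀ x y z : lp (fun _ : τ => ℂ) p, (⇑z = ⇑x * ⇑y) →
      ⇑(S z) = ⇑(S x) * ⇑(ψ y) + ⇑(ψ x) * ⇑(S y))
    (w : τ → lp (fun _ : τ => ℂ) p)
    (hw : ∀ β α : τ, w β α = if α = β then (1 : ℂ) else 0) :
    ∀ β α : τ, ψ (w β) α = (1 / 2 : ℂ) * S (w β) α := by
  intro β α
  by_cases hc : φ α = β
  · have h1 : ⇑(w β) = ⇑(w β) * ⇑(w β) := by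
      funext γ
      by_cases h : γ = β <;> simp [hw, h]
    have key := congrFun (hder (w β) (w β) (w β) h1) α
    have hs : S (w β) α = 1 := by rw [hS, hw]; simp [hc]
    simp only [Pi.add_apply, Pi.mul_apply, hs] at key
    rw [hs]
    linear_combination -key / 2
  · set γ := φ α with hγ
    have h0 : ⇑(0 : lp (fun _ : τ => ℂ) p) = ⇑(w β) * ⇑(w γ) := by
      funext x
      by_cases h : x = β
      · have : x ≠ γ := by rw [h]; exact fun hh => hc hh.symm
        simp [hw, h, this, Ne.symm hc]
      · simp [hw, h]
    have key := congrFun (hder (w β) (w γ) 0 h0) α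
    have hs1 : S (w β) α = 0 := by rw [hS, hw]; simp [hc]; exact hc
    have hs2 : S (w γ) α = 1 := by rw [hS, hw]; simp; exact hγ.symm
    have hS0 : S (0 : lp (fun _ : τ => ℂ) p) α = 0 := by rw [hS]; simp
    simp only [Pi.add_apply, Pi.mul_apply, hs1, hs2, hS0] at key
    rw [hs1]
    linear_combination -key
end

section
/- Let τ be a nonempty set, p ∈ [1,∞], and φ : τ → τ such that there exists N ∈ ℕ with card(φ⁻¹({α})) ≤ N for all α ∈ τ. Let ψ : ℓ^p(τ) → ℓ^p(τ) be a continuous linear operator. Then σ_φ↾ℓ^p(τ) is a ψ-derivation, i.e., σ_φ(xy) = σ_φ(x)·ψ(y) + ψ(x)·σ_φ(y) for all x, y ∈ ℓ^p(τ), if and only if ψ = (1/2)·σ_φ↾ℓ^p(τ). -/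
open scoped ENNReal

/-- For a continuous linear operator `ψ` on `ℓ^p(τ)`, the generalized shift
`σ_φ↾ℓ^p(τ)` is a `ψ`-derivation iff `ψ = (1/2) σ_φ↾ℓ^p(τ)`. -/
theorem stmt_7 (τ : Type*) [Nonempty τ] (p : ℝ≥0∞) [Fact (1 ≤ p)]
    (φ : τ → τ) (N : ℕ) (hφ : ∀ α : τ, (φ ⁻¹' {α}).encard ≤ N)
    (S : lp (fun _ : τ => ℂ) p →L[ℂ] lp (fun _ : τ => ℂ) p)
    (hS : ∀ x : lp (fun _ : τ => ℂ) p, ∀ α : τ, S x α = x (φ α))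
    (ψ : lp (fun _ : τ => ℂ) p →L[ℂ] lp (fun _ : τ => ℂ) p) :
    (∀ x y z : lp (fun _ : τ => ℂ) p, (⇑z = ⇑x * ⇑y) →
        ⇑(S z) = ⇑(S x) * ⇑(ψ y) + ⇑(ψ x) * ⇑(S y)) ↔
      ψ = (1 / 2 : ℂ) • S := by
  classical
  constructor
  · intro h
    ext x α
    set β := φ α with hβ
    set e : lp (fun _ : τ => ℂ) p := lp.single p β 1 with he
    have hecoe : ∀ j, e j = if j = β then 1 else 0 := by
      intro j
      by_cases hj : j = β
      · subst hj; simp [he, lp.single_apply_self]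
      · simp [he, lp.single_apply_ne p β _ hj, hj]
    have h1 : (⇑e : τ → ℂ) = ⇑e * ⇑e := by
      funext j
      simp only [Pi.mul_apply, hecoe]
      split <;> simp
    have key := h e e e h1
    have hSe : S e α = 1 := by rw [hS]; rw [hecoe]; simp [hβ]
    have hψe : ψ e α = 1 / 2 := by
      have := congrFun key α
      simp only [Pi.add_apply, Pi.mul_apply, hSe, one_mul, mul_one] at this
      linear_combination -this / 2
    have hxz : ⇑((x β) • e) = ⇑x * ⇑e := by
      funext j
      rw [lp.coeFn_smul]
      simp only [Pi.smul_apply, Pi.mul_apply, hecoe, smul_eq_mul]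
      split
      · rename_i hj; subst hj; ring
      · ring
    have key2 := congrFun (h x e ((x β) • e) hxz) α
    rw [map_smul, lp.coeFn_smul] at key2
    simp only [Pi.add_apply, Pi.mul_apply, Pi.smul_apply, hS, hecoe, hψe,
      smul_eq_mul] at key2
    simp only [hβ, if_pos rfl, if_true, mul_one] at key2
    have hx : ψ x α = (1 / 2 : ℂ) * x (φ α) := by linear_combination -key2
    simp only [ContinuousLinearMap.smul_apply, lp.coeFn_smul, Pi.smul_apply,
      smul_eq_mul, hx, hS]
  · intro h x y z hz
    subst h
    funext α
    have hzα := congrFun hz (φ α)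
    simp only [Pi.add_apply, Pi.mul_apply, ContinuousLinearMap.smul_apply,
      lp.coeFn_smul, Pi.smul_apply, hS, smul_eq_mul]
    rw [hzα]
    simp only [Pi.mul_apply]
    ring
end

section
/- Let τ be a nonempty set, p ∈ [1,∞], and φ : τ → τ such that there exists N ∈ ℕ with card(φ⁻¹({α})) ≤ N for all α ∈ τ. Then σ_φ↾ℓ^p(τ) is not a Jordan derivation; that is, it is not the case that σ_φ(x²) = σ_φ(x)·x + x·σ_φ(x) for all x ∈ ℓ^p(τ). In particular, σ_φ↾ℓ^p(τ) is not a derivation. -/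
open scoped ENNReal

/-- The generalized shift `σ_φ↾ℓ^p(τ)` is not a Jordan derivation; in particular it is
not a derivation. -/
theorem stmt_8 (τ : Type*) [Nonempty τ] (p : ℝ≥0∞) [Fact (1 ≤ p)]
    (φ : τ → τ) (N : ℕ) (hφ : ∀ α : τ, (φ ⁻¹' {α}).encard ≤ N)
    (S : lp (fun _ : τ => ℂ) p → lp (fun _ : τ => ℂ) p)
    (hS : ∀ x : lp (fun _ : τ => ℂ) p, ∀ α : τ, S x α = x (φ α)) :
    (¬ ∀ x z : lp (fun _ : τ => ℂ) p, (⇑z = ⇑x * ⇑x) →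
        ⇑(S z) = ⇑(S x) * ⇑x + ⇑x * ⇑(S x)) ∧
    (¬ ∀ x y z : lp (fun _ : τ => ℂ) p, (⇑z = ⇑x * ⇑y) →
        ⇑(S z) = ⇑(S x) * ⇑y + ⇑x * ⇑(S y)) := by
  classical
  obtain ⟨β⟩ := ‹Nonempty τ›
  set α₀ := φ β with hα₀
  set x : lp (fun _ : τ => ℂ) p := lp.single p α₀ 1 with hx
  have hxy : ⇑x = ⇑x * ⇑x := by
    funext j
    by_cases h : j = α₀
    · subst h; simp [hx, lp.single_apply_self]
    · simp [hx, lp.single_apply_ne p α₀ _ h, Pi.single_apply, h]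
  have key : ¬ (⇑(S x) = ⇑(S x) * ⇑x + ⇑x * ⇑(S x)) := by
    intro H
    have h1 : S x β = x (φ β) := hS x β
    have h2 : x α₀ = 1 := lp.single_apply_self p α₀ 1
    have h3 := congrFun H β
    rw [← hα₀] at h1
    simp only [Pi.add_apply, Pi.mul_apply] at h3
    rw [h1, h2] at h3
    by_cases hb : β = α₀
    · rw [hb] at h3
      rw [h2] at h3
      norm_num at h3
    · have h4 : x β = 0 := lp.single_apply_ne p α₀ _ hb
      rw [h4] at h3
      norm_num at h3
  constructor
  · intro H
    exact key (H x x hxy)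
  · intro H
    exact key (H x x x hxy)
end

section
/- Let τ be a nonempty set, p ∈ [1,∞], and φ : τ → τ such that there exists N ∈ ℕ with card(φ⁻¹({α})) ≤ N for all α ∈ τ. Then σ_φ↾ℓ^p(τ) is not a Jordan triple derivation; that is, it is not the case that σ_φ(xyx) = σ_φ(x)·y·x + x·σ_φ(y)·x + x·y·σ_φ(x) for all x, y ∈ ℓ^p(τ). -/
open scoped ENNReal

/-- The generalized shift `σ_φ↾ℓ^p(τ)` is not a Jordan triple derivation. -/
theorem stmt_9 (τ : Type*) [Nonempty τ] (p : ℝ≥0∞) [Fact (1 ≤ p)]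
    (φ : τ → τ) (N : ℕ) (hφ : ∀ α : τ, (φ ⁻¹' {α}).encard ≤ N)
    (S : lp (fun _ : τ => ℂ) p → lp (fun _ : τ => ℂ) p)
    (hS : ∀ x : lp (fun _ : τ => ℂ) p, ∀ α : τ, S x α = x (φ α)) :
    ¬ ∀ x y z : lp (fun _ : τ => ℂ) p, (⇑z = ⇑x * ⇑y * ⇑x) →
        ⇑(S z) = ⇑(S x) * ⇑y * ⇑x + ⇑x * ⇑(S y) * ⇑x + ⇑x * ⇑y * ⇑(S x) := by
  classical
  intro H
  obtain ⟨α₀⟩ := ‹Nonempty τ›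
  set β := φ α₀ with hβ
  set x : lp (fun _ : τ => ℂ) p := lp.single p β 1 with hx
  have hxy : ⇑x = ⇑x * ⇑x * ⇑x := by
    funext j
    simp only [Pi.mul_apply, hx]
    by_cases h : j = β
    · subst h; rw [lp.single_apply_self]; ring
    · rw [lp.single_apply_ne p β _ h]; ring
  have key := congrFun (H x x x hxy) α₀
  simp only [Pi.add_apply, Pi.mul_apply, hS] at key
  have h1 : x (φ α₀) = 1 := by rw [← hβ, hx, lp.single_apply_self]
  by_cases h : α₀ = β
  · -- then φ β = β, so at β: LHS 1, RHS 3
    rw [h1] at key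
    have h2 : x α₀ = 1 := by rw [hx, h, lp.single_apply_self]
    rw [h2] at key
    norm_num at key
  · have h2 : x α₀ = 0 := by rw [hx, lp.single_apply_ne p β _ h]
    rw [h1, h2] at key
    norm_num at key
end

section
/- Let τ be a nonempty set, p ∈ [1,∞], and φ : τ → τ such that there exists N ∈ ℕ with card(φ⁻¹({α})) ≤ N for all α ∈ τ. Let d : ℓ^p(τ) → ℓ^p(τ) be a continuous linear operator that is a σ_φ↾ℓ^p(τ)-derivation, i.e., d(xy) = d(x)·σ_φ(y) + σ_φ(x)·d(y) for all x, y ∈ ℓ^p(τ). Then d = 0. -/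
open scoped ENNReal

/-- Theorem: if a continuous linear operator `d` on `ℓ^p(τ)` is a
`σ_φ↾ℓ^p(τ)`-derivation, i.e. `d(xy) = d(x)·σ_φ(y) + σ_φ(x)·d(y)`, then `d = 0`. -/
theorem stmt_11 (τ : Type*) [Nonempty τ] (p : ℝ≥0∞) [Fact (1 ≤ p)]
    (φ : τ → τ) (N : ℕ) (hφ : ∀ α : τ, (φ ⁻¹' {α}).encard ≤ N)
    (S : lp (fun _ : τ => ℂ) p → lp (fun _ : τ => ℂ) p)
    (hS : ∀ x : lp (fun _ : τ => ℂ) p, ∀ α : τ, S x α = x (φ α))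
    (d : lp (fun _ : τ => ℂ) p →L[ℂ] lp (fun _ : τ => ℂ) p)
    (hder : ∀ x y z : lp (fun _ : τ => ℂ) p, (⇑z = ⇑x * ⇑y) →
      ⇑(d z) = ⇑(d x) * ⇑(S y) + ⇑(S x) * ⇑(d y)) :
    d = 0 := by
  classical
  ext x α
  set e : lp (fun _ : τ => ℂ) p := lp.single p (φ α) (1:ℂ) with he
  have he_apply : ∀ γ, e γ = if γ = φ α then 1 else 0 := by
    intro γ
    rw [he, lp.single_apply]
    by_cases h : γ = φ α <;> simp [h]
  -- Step A: d e = 0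
  have hA : ∀ γ, d e γ = 0 := by
    have h1 := hder e e e (by
      funext γ
      simp only [Pi.mul_apply, he_apply]
      by_cases h : γ = φ α <;> simp [h])
    intro γ
    have h2 := congrFun h1 γ
    simp only [Pi.add_apply, Pi.mul_apply, hS] at h2
    by_cases h : φ γ = φ α
    · rw [he_apply, if_pos h] at h2
      ring_nf at h2 ⊢
      linear_combination (norm := ring_nf) -h2
    · rw [he_apply, if_neg h] at h2
      simpa using h2
  -- Step B
  have hB := hder x e ((x (φ α)) • e) (by
    funext γ
    simp only [Pi.mul_apply, lp.coeFn_smul, Pi.smul_apply, he_apply, smul_eq_mul]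
    by_cases h : γ = φ α <;> simp [h])
  have h3 := congrFun hB α
  simp only [map_smul, lp.coeFn_smul, Pi.smul_apply, Pi.add_apply, Pi.mul_apply,
    hA, smul_eq_mul, mul_zero, hS, he_apply, if_pos rfl, mul_one, add_zero] at h3
  simpa using h3.symm
end

section
/- Let τ be a nonempty set, p ∈ [1,∞], and φ : τ → τ such that there exists N ∈ ℕ with card(φ⁻¹({α})) ≤ N for all α ∈ τ. Let ℰ be the set of pairs (ψ, λ) of continuous linear operators ψ, λ : ℓ^p(τ) → ℓ^p(τ) such that σ_φ↾ℓ^p(τ) is a (ψ,λ)-derivation, i.e., σ_φ(xy) = σ_φ(x)·ψ(y) + λ(x)·σ_φ(y) for all x, y ∈ ℓ^p(τ). Then the cardinality of ℰ equals 2^{max(ℵ₀, card τ)}. -/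
open scoped ENNReal

set_option linter.unusedSectionVars false
namespace Stmt12Aux

variable {τ : Type*} [Nonempty τ] {p : ℝ≥0∞} [Fact (1 ≤ p)] {φ : τ → τ} {N : ℕ}

lemma hp_ne_zero : p ≠ 0 := (zero_lt_one.trans_le (Fact.out : 1 ≤ p)).ne'

lemma one_le_N (hφ : ∀ α : τ, (φ ⁻¹' {α}).encard ≤ N) : 1 ≤ N := by
  obtain ⟨α⟩ := ‹Nonempty τ›
  have h1 : (1 : ℕ∞) ≤ (φ ⁻¹' {φ α}).encard :=
    Set.one_le_encard_iff_nonempty.2 ⟨α, rfl⟩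
  have := h1.trans (hφ (φ α))
  exact_mod_cast this

lemma filter_card_le [DecidableEq τ] (hφ : ∀ α : τ, (φ ⁻¹' {α}).encard ≤ N)
    (s : Finset τ) (b : τ) : (s.filter fun a => φ a = b).card ≤ N := by
  have h1 : (↑(s.filter fun a => φ a = b) : Set τ) ⊆ φ ⁻¹' {b} := by
    intro a ha
    simp only [Finset.coe_filter, Set.mem_setOf_eq] at ha
    exact ha.2
  have h2 := (Set.encard_mono h1).trans (hφ b)
  rwa [Set.encard_coe_eq_coe_finsetCard, Nat.cast_le] at h2

lemma sum_comp_le [DecidableEq τ] (hφ : ∀ α : τ, (φ ⁻¹' {α}).encard ≤ N)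
    (g : τ → ℝ) (hg : ∀ β, 0 ≤ g β) (s : Finset τ) :
    ∑ α ∈ s, g (φ α) ≤ N * ∑ β ∈ s.image φ, g β := by
  rw [Finset.sum_comp, Finset.mul_sum]
  refine Finset.sum_le_sum fun b _ => ?_
  rw [nsmul_eq_mul]
  exact mul_le_mul_of_nonneg_right (by exact_mod_cast filter_card_le hφ s b) (hg b)

lemma key_sum (hφ : ∀ α : τ, (φ ⁻¹' {α}).encard ≤ N) (c : τ → ℂ) {M : ℝ}
    (hM : ∀ α, ‖c α‖ ≤ M) (x : lp (fun _ : τ => ℂ) p) (s : Finset τ)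
    (hp : 0 < p.toReal) :
    ∑ α ∈ s, ‖c α * x (φ α)‖ ^ p.toReal ≤ M ^ p.toReal * (N * ‖x‖ ^ p.toReal) := by
  classical
  have hM0 : 0 ≤ M := le_trans (norm_nonneg _) (hM (Classical.arbitrary τ))
  calc ∑ α ∈ s, ‖c α * x (φ α)‖ ^ p.toReal
      ≤ ∑ α ∈ s, M ^ p.toReal * ‖x (φ α)‖ ^ p.toReal := by
        refine Finset.sum_le_sum fun α _ => ?_
        rw [norm_mul, Real.mul_rpow (norm_nonneg _) (norm_nonneg _)]
        exact mul_le_mul_of_nonneg_right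
          (Real.rpow_le_rpow (norm_nonneg _) (hM α) hp.le)
          (Real.rpow_nonneg (norm_nonneg _) _)
    _ = M ^ p.toReal * ∑ α ∈ s, ‖x (φ α)‖ ^ p.toReal := by rw [Finset.mul_sum]
    _ ≤ M ^ p.toReal * (N * ∑ β ∈ s.image φ, ‖x β‖ ^ p.toReal) :=
        mul_le_mul_of_nonneg_left
          (sum_comp_le hφ _ (fun β => Real.rpow_nonneg (norm_nonneg _) _) s)
          (Real.rpow_nonneg hM0 _)
    _ ≤ M ^ p.toReal * (N * ‖x‖ ^ p.toReal) :=
        mul_le_mul_of_nonneg_left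
          (mul_le_mul_of_nonneg_left (lp.sum_rpow_le_norm_rpow hp x _)
            (Nat.cast_nonneg N))
          (Real.rpow_nonneg hM0 _)

lemma memAux (hφ : ∀ α : τ, (φ ⁻¹' {α}).encard ≤ N) (c : τ → ℂ) {M : ℝ}
    (hM : ∀ α, ‖c α‖ ≤ M) (x : lp (fun _ : τ => ℂ) p) :
    Memℓp (fun α => c α * x (φ α)) p := by
  have hM0 : 0 ≤ M := le_trans (norm_nonneg _) (hM (Classical.arbitrary τ))
  rcases eq_or_ne p ∞ with hp | hp
  · subst hp
    apply memℓp_infty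
    refine ⟨M * ‖x‖, ?_⟩
    rintro r ⟨α, rfl⟩
    simp only
    rw [norm_mul]
    exact mul_le_mul (hM α) (lp.norm_apply_le_norm (by simp) x (φ α))
      (norm_nonneg _) hM0
  · have hpr : 0 < p.toReal := ENNReal.toReal_pos hp_ne_zero hp
    exact memℓp_gen' (C := M ^ p.toReal * (N * ‖x‖ ^ p.toReal))
      (fun s => key_sum hφ c hM x s hpr)

lemma normAux (hφ : ∀ α : τ, (φ ⁻¹' {α}).encard ≤ N) (c : τ → ℂ) {M : ℝ}
    (hM : ∀ α, ‖c α‖ ≤ M) (x y : lp (fun _ : τ => ℂ) p)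
    (hy : ∀ α, y α = c α * x (φ α)) : ‖y‖ ≤ (M * N) * ‖x‖ := by
  have hN : (1 : ℝ) ≤ N := by exact_mod_cast one_le_N hφ
  have hM0 : 0 ≤ M := le_trans (norm_nonneg _) (hM (Classical.arbitrary τ))
  have hC0 : 0 ≤ (M * N) * ‖x‖ :=
    mul_nonneg (mul_nonneg hM0 (Nat.cast_nonneg N)) (norm_nonneg _)
  rcases eq_or_ne p ∞ with hp | hp
  · subst hp
    refine lp.norm_le_of_forall_le hC0 fun α => ?_
    rw [hy α, norm_mul]
    have h1 : ‖c α‖ * ‖x (φ α)‖ ≤ M * ‖x‖ :=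
      mul_le_mul (hM α) (lp.norm_apply_le_norm (by simp) x (φ α))
        (norm_nonneg _) hM0
    nlinarith [norm_nonneg x]
  · have hpr : 0 < p.toReal := ENNReal.toReal_pos hp_ne_zero hp
    have hpr1 : 1 ≤ p.toReal := by
      rw [← ENNReal.toReal_one]
      exact ENNReal.toReal_mono hp (Fact.out : 1 ≤ p)
    refine lp.norm_le_of_forall_sum_le hpr hC0 fun s => ?_
    have h1 : ∑ α ∈ s, ‖y α‖ ^ p.toReal ≤ M ^ p.toReal * (N * ‖x‖ ^ p.toReal) :=
      calc ∑ α ∈ s, ‖y α‖ ^ p.toReal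
          = ∑ α ∈ s, ‖c α * x (φ α)‖ ^ p.toReal :=
            Finset.sum_congr rfl fun α _ => by rw [hy α]
        _ ≤ _ := key_sum hφ c hM x s hpr
    refine h1.trans ?_
    rw [Real.mul_rpow (mul_nonneg hM0 (Nat.cast_nonneg N)) (norm_nonneg _),
      Real.mul_rpow hM0 (Nat.cast_nonneg N), mul_assoc]
    refine mul_le_mul_of_nonneg_left
      (mul_le_mul_of_nonneg_right ?_ (Real.rpow_nonneg (norm_nonneg _) _))
      (Real.rpow_nonneg hM0 _)
    calc (N : ℝ) = (N : ℝ) ^ (1 : ℝ) := (Real.rpow_one _).symm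
      _ ≤ (N : ℝ) ^ p.toReal := Real.rpow_le_rpow_of_exponent_le hN hpr1

/-- The operator `x ↦ (c_α x_{φ α})_α` on `ℓ^p(τ)`. -/
noncomputable def T (hφ : ∀ α : τ, (φ ⁻¹' {α}).encard ≤ N) (c : τ → ℂ) (M : ℝ)
    (hM : ∀ α, ‖c α‖ ≤ M) :
    lp (fun _ : τ => ℂ) p →L[ℂ] lp (fun _ : τ => ℂ) p :=
  LinearMap.mkContinuous
    { toFun := fun x => ⟨fun α => c α * x (φ α), memAux hφ c hM x⟩
      map_add' := fun x y => by
        apply lp.ext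
        funext α
        change c α * (x + y) (φ α) = (fun α => c α * x (φ α)) α + (fun α => c α * y (φ α)) α
        rw [lp.coeFn_add]
        simp [mul_add]
      map_smul' := fun r x => by
        apply lp.ext
        funext α
        change c α * (r • x) (φ α) = (r • fun α => c α * x (φ α)) α
        rw [lp.coeFn_smul]
        simp [smul_eq_mul]
        ring }
    (M * N) (fun x => normAux hφ c hM x _ (fun _ => rfl))

lemma T_apply (hφ : ∀ α : τ, (φ ⁻¹' {α}).encard ≤ N) (c : τ → ℂ) (M : ℝ)
    (hM : ∀ α, ‖c α‖ ≤ M) (x : lp (fun _ : τ => ℂ) p) (α : τ) :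
    T hφ c M hM x α = c α * x (φ α) := rfl

lemma formulas [DecidableEq τ] (S : lp (fun _ : τ => ℂ) p → lp (fun _ : τ => ℂ) p)
    (hS : ∀ x : lp (fun _ : τ => ℂ) p, ∀ α : τ, S x α = x (φ α))
    (ψ lam : lp (fun _ : τ => ℂ) p →L[ℂ] lp (fun _ : τ => ℂ) p)
    (hq : ∀ x y z : lp (fun _ : τ => ℂ) p, ⇑z = ⇑x * ⇑y →
      ⇑(S z) = ⇑(S x) * ⇑(ψ y) + ⇑(lam x) * ⇑(S y))
    (x : lp (fun _ : τ => ℂ) p) (α : τ) :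
    ψ x α = x (φ α) * (1 - lam (lp.single p (φ α) 1) α) ∧
    lam x α = x (φ α) * lam (lp.single p (φ α) 1) α := by
  classical
  have hsingle : ∀ (β : τ) (a : ℂ) (γ : τ),
      (lp.single p β a : ∀ _ : τ, ℂ) γ = if γ = β then a else 0 := by
    intro β a γ
    rcases eq_or_ne γ β with h | h
    · subst h
      rw [lp.single_apply_self, if_pos rfl]
    · rw [lp.single_apply_ne (E := fun _ : τ => ℂ) p β a h, if_neg h]
  have hprodA : ∀ w : lp (fun _ : τ => ℂ) p,
      ⇑(lp.single p (φ α) (w (φ α))) = ⇑w * ⇑(lp.single p (φ α) (1 : ℂ)) := by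
    intro w
    funext γ
    rw [Pi.mul_apply, hsingle, hsingle]
    split_ifs with h
    · rw [h, mul_one]
    · rw [mul_zero]
  have hprodB : ∀ w : lp (fun _ : τ => ℂ) p,
      ⇑(lp.single p (φ α) (w (φ α))) = ⇑(lp.single p (φ α) (1 : ℂ)) * ⇑w := by
    intro w
    funext γ
    rw [Pi.mul_apply, hsingle, hsingle]
    split_ifs with h
    · rw [h, one_mul]
    · rw [zero_mul]
  have hpsi : ∀ w : lp (fun _ : τ => ℂ) p,
      ψ w α = w (φ α) * (1 - lam (lp.single p (φ α) 1) α) := by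
    intro w
    have HB := congrFun
      (hq (lp.single p (φ α) (1 : ℂ)) w (lp.single p (φ α) (w (φ α))) (hprodB w)) α
    simp only [Pi.add_apply, Pi.mul_apply, hS, hsingle, eq_self_iff_true, if_true] at HB
    linear_combination -HB
  refine ⟨hpsi x, ?_⟩
  have HA := congrFun
    (hq x (lp.single p (φ α) (1 : ℂ)) (lp.single p (φ α) (x (φ α))) (hprodA x)) α
  simp only [Pi.add_apply, Pi.mul_apply, hS, hsingle, eq_self_iff_true, if_true] at HA
  rw [hpsi] at HA
  simp only [hsingle, eq_self_iff_true, if_true] at HA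
  linear_combination -HA

lemma derivT (hφ : ∀ α : τ, (φ ⁻¹' {α}).encard ≤ N)
    (S : lp (fun _ : τ => ℂ) p → lp (fun _ : τ => ℂ) p)
    (hS : ∀ x : lp (fun _ : τ => ℂ) p, ∀ α : τ, S x α = x (φ α))
    (c : τ → ℂ) {M M' : ℝ} (hM : ∀ α, ‖c α‖ ≤ M) (hM' : ∀ α, ‖1 - c α‖ ≤ M') :
    ∀ x y z : lp (fun _ : τ => ℂ) p, ⇑z = ⇑x * ⇑y →
      ⇑(S z) = ⇑(S x) * ⇑(T hφ (fun α => 1 - c α) M' hM' y) +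
        ⇑(T hφ c M hM x) * ⇑(S y) := by
  intro x y z h
  funext α
  have hz := congrFun h (φ α)
  rw [Pi.mul_apply] at hz
  simp only [Pi.add_apply, Pi.mul_apply, hS, T_apply, hz]
  ring

lemma card_arrow_eq {σ : Type*} [Nonempty σ] {A : Type}
    (hA : Cardinal.mk A = Cardinal.continuum) :
    Cardinal.mk (σ → A) = 2 ^ max Cardinal.aleph0 (Cardinal.mk σ) := by
  rw [Cardinal.mk_arrow, hA, Cardinal.lift_continuum, Cardinal.lift_uzero,
    ← Cardinal.two_power_aleph0, ← Cardinal.power_mul,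
    Cardinal.mul_eq_max_of_aleph0_le_left le_rfl (Cardinal.mk_ne_zero σ)]

end Stmt12Aux

open Stmt12Aux in
/-- The set `ℰ` of pairs `(ψ, λ)` of continuous linear operators on `ℓ^p(τ)` for which
`σ_φ↾ℓ^p(τ)` is a `(ψ,λ)`-derivation has cardinality `2 ^ max(ℵ₀, card τ)`. -/
theorem stmt_12 (τ : Type*) [Nonempty τ] (p : ℝ≥0∞) [Fact (1 ≤ p)]
    (φ : τ → τ) (N : ℕ) (hφ : ∀ α : τ, (φ ⁻¹' {α}).encard ≤ N)
    (S : lp (fun _ : τ => ℂ) p → lp (fun _ : τ => ℂ) p)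
    (hS : ∀ x : lp (fun _ : τ => ℂ) p, ∀ α : τ, S x α = x (φ α)) :
    Cardinal.mk
      {q : (lp (fun _ : τ => ℂ) p →L[ℂ] lp (fun _ : τ => ℂ) p) ×
           (lp (fun _ : τ => ℂ) p →L[ℂ] lp (fun _ : τ => ℂ) p) //
        ∀ x y z : lp (fun _ : τ => ℂ) p, (⇑z = ⇑x * ⇑y) →
          ⇑(S z) = ⇑(S x) * ⇑(q.1 y) + ⇑(q.2 x) * ⇑(S y)} =
      2 ^ max Cardinal.aleph0 (Cardinal.mk τ) := by
  classical
  have e1 : Cardinal.mk (τ → ℂ) = 2 ^ max Cardinal.aleph0 (Cardinal.mk τ) :=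
    card_arrow_eq Cardinal.mk_complex
  have e2 : Cardinal.mk (τ → Set.Icc (0:ℝ) 1) = 2 ^ max Cardinal.aleph0 (Cardinal.mk τ) :=
    card_arrow_eq (Cardinal.mk_Icc_real zero_lt_one)
  apply le_antisymm
  · rw [← e1]
    apply Cardinal.mk_le_of_injective
      (f := fun q => fun α : τ => q.1.2 (lp.single p (φ α) (1:ℂ)) α)
    rintro ⟨⟨ψ, lam⟩, hq⟩ ⟨⟨ψ', lam'⟩, hq'⟩ h
    simp only at h
    have hc : ∀ α : τ, lam (lp.single p (φ α) 1) α = lam' (lp.single p (φ α) 1) α :=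
      fun α => congrFun h α
    apply Subtype.ext
    have key1 := formulas S hS ψ lam hq
    have key2 := formulas S hS ψ' lam' hq'
    have hψ : ψ = ψ' := by
      ext x α
      rw [(key1 x α).1, (key2 x α).1, hc α]
    have hlam : lam = lam' := by
      ext x α
      rw [(key1 x α).2, (key2 x α).2, hc α]
    show (ψ, lam) = (ψ', lam')
    rw [hψ, hlam]
  · rw [← e2]
    have h1 : ∀ t : τ → Set.Icc (0:ℝ) 1, ∀ α : τ, ‖(((t α : ℝ)) : ℂ)‖ ≤ 1 := by
      intro t α
      rw [Complex.norm_real, Real.norm_eq_abs, abs_le]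
      exact ⟨by linarith [(t α).2.1], (t α).2.2⟩
    have h2 : ∀ t : τ → Set.Icc (0:ℝ) 1, ∀ α : τ, ‖1 - (((t α : ℝ)) : ℂ)‖ ≤ 2 := by
      intro t α
      refine (norm_sub_le _ _).trans ?_
      rw [norm_one]
      linarith [h1 t α]
    apply Cardinal.mk_le_of_injective
      (f := fun t => ⟨(T hφ (fun α => 1 - ((t α : ℝ) : ℂ)) 2 (h2 t),
                       T hφ (fun α => ((t α : ℝ) : ℂ)) 1 (h1 t)),
        derivT hφ S hS _ (h1 t) (h2 t)⟩)
    intro t t' h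
    funext α
    have h3 : T hφ (fun α => ((t α : ℝ) : ℂ)) 1 (h1 t)
        = T hφ (fun α => ((t' α : ℝ) : ℂ)) 1 (h1 t') :=
      congrArg (fun q => q.1.2) h
    have h4 := congrFun
      (congrArg (fun L : lp (fun _ : τ => ℂ) p →L[ℂ] lp (fun _ : τ => ℂ) p =>
        ⇑(L (lp.single p (φ α) (1:ℂ)))) h3) α
    simp only [T_apply, lp.single_apply_self, mul_one] at h4
    exact Subtype.ext (by exact_mod_cast h4)
end

section
/- Let τ be a nonempty set, p ∈ [1,∞], and φ : τ → τ such that there exists N ∈ ℕ with card(φ⁻¹({α})) ≤ N for all α ∈ τ. Let d : ℓ^p(τ) → ℓ^p(τ) be a derivation (a linear map with d(xy) = d(x)·y + x·d(y) for all x, y ∈ ℓ^p(τ)) such that σ_φ(x²) = σ_φ(x)·x + x·d(x) for all x ∈ ℓ^p(τ). Then φ = id_τ, and consequently σ_φ↾ℓ^p(τ) is the identity map of ℓ^p(τ). -/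
open scoped ENNReal

/-- Lemma: if `d` is a derivation on `ℓ^p(τ)` and `σ_φ(x²) = σ_φ(x)·x + x·d(x)` for all
`x ∈ ℓ^p(τ)`, then `φ = id` and hence `σ_φ↾ℓ^p(τ)` is the identity map. -/
theorem stmt_13 (τ : Type*) [Nonempty τ] (p : ℝ≥0∞) [Fact (1 ≤ p)]
    (φ : τ → τ) (N : ℕ) (hφ : ∀ α : τ, (φ ⁻¹' {α}).encard ≤ N)
    (S : lp (fun _ : τ => ℂ) p → lp (fun _ : τ => ℂ) p)
    (hS : ∀ x : lp (fun _ : τ => ℂ) p, ∀ α : τ, S x α = x (φ α))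
    (d : lp (fun _ : τ => ℂ) p →ₗ[ℂ] lp (fun _ : τ => ℂ) p)
    (hd : ∀ x y z : lp (fun _ : τ => ℂ) p, (⇑z = ⇑x * ⇑y) →
      ⇑(d z) = ⇑(d x) * ⇑y + ⇑x * ⇑(d y))
    (hgen : ∀ x z : lp (fun _ : τ => ℂ) p, (⇑z = ⇑x * ⇑x) →
      ⇑(S z) = ⇑(S x) * ⇑x + ⇑x * ⇑(d x)) :
    φ = id ∧ ∀ x : lp (fun _ : τ => ℂ) p, S x = x := by
  classical
  have hfix : ∀ β : τ, φ β = β := by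
    intro β
    set α := φ β with hα
    set e : lp (fun _ : τ => ℂ) p := lp.single p α 1 with he
    have hsq : ⇑e = ⇑e * ⇑e := by
      funext j
      simp only [Pi.mul_apply, he]
      by_cases h : j = α
      · subst h; rw [lp.single_apply_self]; ring
      · rw [lp.single_apply_ne p α _ h]; ring
    -- d e = 0 pointwise
    have hde : ∀ j, d e j = 0 := by
      intro j
      have h1 := congrFun (hd e e e hsq) j
      simp only [Pi.add_apply, Pi.mul_apply] at h1
      by_cases h : j = α
      · subst h
        rw [lp.single_apply_self] at h1
        simp at h1
        linear_combination h1
      · rw [lp.single_apply_ne p α _ h] at h1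
        simpa using h1
    have h2 := congrFun (hgen e e hsq) β
    simp only [Pi.add_apply, Pi.mul_apply] at h2
    rw [hde β, hS e β, ← hα, lp.single_apply_self] at h2
    by_cases h : β = α
    · exact (hα.trans h.symm)
    · rw [lp.single_apply_ne p α _ h] at h2
      simp at h2
  refine ⟨funext fun β => hfix β, fun x => ?_⟩
  ext α
  rw [hS x α, hfix α]
end

section
/- Let τ be a nonempty set, p ∈ [1,∞], and φ : τ → τ such that there exists N ∈ ℕ with card(φ⁻¹({α})) ≤ N for all α ∈ τ. Then σ_φ↾ℓ^p(τ) is a generalized derivation — i.e., there exists a derivation d : ℓ^p(τ) → ℓ^p(τ) with σ_φ(xy) = σ_φ(x)·y + x·d(y) for all x, y ∈ ℓ^p(τ) — if and only if φ = id_τ. -/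
open scoped ENNReal

/-- The generalized shift `σ_φ↾ℓ^p(τ)` is a generalized derivation (there exists a
derivation `d` with `σ_φ(xy) = σ_φ(x)·y + x·d(y)`) if and only if `φ = id`. -/
theorem stmt_14 (τ : Type*) [Nonempty τ] (p : ℝ≥0∞) [Fact (1 ≤ p)]
    (φ : τ → τ) (N : ℕ) (hφ : ∀ α : τ, (φ ⁻¹' {α}).encard ≤ N)
    (S : lp (fun _ : τ => ℂ) p → lp (fun _ : τ => ℂ) p)
    (hS : ∀ x : lp (fun _ : τ => ℂ) p, ∀ α : τ, S x α = x (φ α)) :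
    (∃ d : lp (fun _ : τ => ℂ) p →ₗ[ℂ] lp (fun _ : τ => ℂ) p,
        (∀ x y z : lp (fun _ : τ => ℂ) p, (⇑z = ⇑x * ⇑y) →
          ⇑(d z) = ⇑(d x) * ⇑y + ⇑x * ⇑(d y)) ∧
        (∀ x y z : lp (fun _ : τ => ℂ) p, (⇑z = ⇑x * ⇑y) →
          ⇑(S z) = ⇑(S x) * ⇑y + ⇑x * ⇑(d y))) ↔
      φ = id := by
  classical
  constructor
  · rintro ⟨d, hd, hSd⟩
    funext β
    set α := φ β with hα
    set e : lp (fun _ : τ => ℂ) p := lp.single p α 1 with he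
    have hee : (⇑e : τ → ℂ) = ⇑e * ⇑e := by
      funext γ
      by_cases h : γ = α
      · subst h
        simp [he, lp.single_apply_self]
      · simp [he, Pi.single_apply, h]
    have hde : ∀ γ, d e γ = 0 := by
      intro γ
      have h1 := congrFun (hd e e e hee) γ
      simp only [Pi.add_apply, Pi.mul_apply] at h1
      by_cases h : γ = α
      · rw [h, he, lp.single_apply_self, ← he] at h1
        have h2 : d e α = d e α + d e α := by simpa using h1
        rw [h]
        exact (left_eq_add.mp h2)
      · rw [he] at h1 ⊢
        rw [lp.single_apply_ne p α _ h] at h1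
        rw [← he] at h1 ⊢
        simpa using h1
    have h2 := congrFun (hSd e e e hee) β
    simp only [Pi.add_apply, Pi.mul_apply, hde β, mul_zero, add_zero] at h2
    have hSe : S e β = 1 := by
      rw [hS e β, ← hα, he, lp.single_apply_self]
    rw [hSe] at h2
    by_cases h : β = α
    · simpa [hα] using h.symm
    · rw [he, lp.single_apply_ne p α _ h] at h2
      simp at h2
  · rintro rfl
    refine ⟨0, ?_, ?_⟩
    · intro x y z hz
      funext γ
      simp
      show (0:ℂ) = 0 * y γ + x γ * 0
      simp
    · intro x y z hz
      have hSid : ∀ w : lp (fun _ : τ => ℂ) p, (⇑(S w) : τ → ℂ) = ⇑w := by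
        intro w
        funext γ
        simpa using hS w γ
      funext γ
      simp [hSid, hz]
      exact mul_zero (x γ)
end

section
/- Let τ be a nonempty set, p ∈ [1,∞], and φ : τ → τ such that there exists N ∈ ℕ with card(φ⁻¹({α})) ≤ N for all α ∈ τ. Then σ_φ↾ℓ^p(τ) is a generalized Jordan derivation — i.e., there exists a derivation d : ℓ^p(τ) → ℓ^p(τ) with σ_φ(x²) = σ_φ(x)·x + x·d(x) for all x ∈ ℓ^p(τ) — if and only if φ = id_τ. -/
open scoped ENNReal

/-- The generalized shift `σ_φ↾ℓ^p(τ)` is a generalized Jordan derivation (there exists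
a derivation `d` with `σ_φ(x²) = σ_φ(x)·x + x·d(x)`) if and only if `φ = id`. -/
theorem stmt_15 (τ : Type*) [Nonempty τ] (p : ℝ≥0∞) [Fact (1 ≤ p)]
    (φ : τ → τ) (N : ℕ) (hφ : ∀ α : τ, (φ ⁻¹' {α}).encard ≤ N)
    (S : lp (fun _ : τ => ℂ) p → lp (fun _ : τ => ℂ) p)
    (hS : ∀ x : lp (fun _ : τ => ℂ) p, ∀ α : τ, S x α = x (φ α)) :
    (∃ d : lp (fun _ : τ => ℂ) p →ₗ[ℂ] lp (fun _ : τ => ℂ) p,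
        (∀ x y z : lp (fun _ : τ => ℂ) p, (⇑z = ⇑x * ⇑y) →
          ⇑(d z) = ⇑(d x) * ⇑y + ⇑x * ⇑(d y)) ∧
        (∀ x z : lp (fun _ : τ => ℂ) p, (⇑z = ⇑x * ⇑x) →
          ⇑(S z) = ⇑(S x) * ⇑x + ⇑x * ⇑(d x))) ↔
      φ = id := by
  classical
  constructor
  · rintro ⟨d, -, h2⟩
    funext α
    by_contra hne
    set x : lp (fun _ : τ => ℂ) p := lp.single p (φ α) (1 : ℂ) with hx
    have hxx : ⇑x = ⇑x * ⇑x := by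
      funext j
      by_cases hj : j = φ α
      · subst hj; simp [hx, lp.single_apply_self]
      · simp [hx, lp.single_apply_ne p (φ α) _ hj, Pi.single_apply, hj]
    have := congrFun (h2 x x hxx) α
    simp only [Pi.add_apply, Pi.mul_apply, hS x] at this
    have hx1 : x (φ α) = 1 := by
      rw [hx]; exact lp.single_apply_self (E := fun _ : τ => ℂ) p (φ α) (1 : ℂ)
    have hx0 : x α = 0 := by
      rw [hx]; exact lp.single_apply_ne (E := fun _ : τ => ℂ) p (φ α) (1 : ℂ) (fun h => hne (h ▸ rfl))
    simp [hx1, hx0] at this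
  · intro hid
    subst hid
    refine ⟨0, fun x y z hz => by simp only [LinearMap.zero_apply]; rw [lp.coeFn_zero]; simp, fun x z hz => ?_⟩
    funext α
    have h1 := hS z α
    have h2 := hS x α
    simp only [id] at h1 h2
    rw [LinearMap.zero_apply, lp.coeFn_zero]
    simp [h1, h2, congrFun hz α]
end

section
/- Let τ be a nonempty set, p ∈ [1,∞], and φ : τ → τ such that there exists N ∈ ℕ with card(φ⁻¹({α})) ≤ N for all α ∈ τ. Then σ_φ↾ℓ^p(τ) is a generalized Jordan triple derivation — i.e., there exists a Jordan triple derivation d : ℓ^p(τ) → ℓ^p(τ) with σ_φ(xyx) = σ_φ(x)·y·x + x·d(y)·x + x·y·d(x) for all x, y ∈ ℓ^p(τ) — if and only if φ = id_τ. -/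
open scoped ENNReal

/-- The generalized shift `σ_φ↾ℓ^p(τ)` is a generalized Jordan triple derivation (there
exists a Jordan triple derivation `d` with
`σ_φ(xyx) = σ_φ(x)·y·x + x·d(y)·x + x·y·d(x)`) if and only if `φ = id`. -/
theorem stmt_16 (τ : Type*) [Nonempty τ] (p : ℝ≥0∞) [Fact (1 ≤ p)]
    (φ : τ → τ) (N : ℕ) (hφ : ∀ α : τ, (φ ⁻¹' {α}).encard ≤ N)
    (S : lp (fun _ : τ => ℂ) p → lp (fun _ : τ => ℂ) p)
    (hS : ∀ x : lp (fun _ : τ => ℂ) p, ∀ α : τ, S x α = x (φ α)) :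
    (∃ d : lp (fun _ : τ => ℂ) p →ₗ[ℂ] lp (fun _ : τ => ℂ) p,
        (∀ x y z : lp (fun _ : τ => ℂ) p, (⇑z = ⇑x * ⇑y * ⇑x) →
          ⇑(d z) = ⇑(d x) * ⇑y * ⇑x + ⇑x * ⇑(d y) * ⇑x + ⇑x * ⇑y * ⇑(d x)) ∧
        (∀ x y z : lp (fun _ : τ => ℂ) p, (⇑z = ⇑x * ⇑y * ⇑x) →
          ⇑(S z) = ⇑(S x) * ⇑y * ⇑x + ⇑x * ⇑(d y) * ⇑x + ⇑x * ⇑y * ⇑(d x))) ↔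
      φ = id := by
  classical
  constructor
  · rintro ⟨d, -, h2⟩
    funext β
    by_contra hβ
    set α := φ β with hα
    have hne : β ≠ α := fun h => hβ (by simpa [hα] using h.symm)
    set e : lp (fun _ : τ => ℂ) p := lp.single p α 1 with he
    have hcube : ⇑e = ⇑e * ⇑e * ⇑e := by
      funext t
      by_cases h : t = α
      · subst h; simp [he, lp.single_apply_self]
      · simp [he, lp.single_apply_ne p α _ h]
        simp [Pi.single_apply, h]
    have := congrFun (h2 e e e hcube) β
    have heβ : e β = 0 := lp.single_apply_ne p α _ hne
    have heφβ : e (φ β) = 1 := by rw [← hα]; exact lp.single_apply_self p α 1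
    rw [hS e β] at this
    simp only [Pi.add_apply, Pi.mul_apply, heβ, heφβ, mul_zero, zero_mul, add_zero] at this
    exact one_ne_zero this
  · rintro rfl
    refine ⟨0, ?_, ?_⟩
    · intro x y z hz
      simp only [LinearMap.zero_apply, lp.coeFn_zero, zero_mul, mul_zero, add_zero]
    · intro x y z hz
      have : ∀ w : lp (fun _ : τ => ℂ) p, ⇑(S w) = ⇑w := by
        intro w; funext t; simpa using hS w t
      simp only [this, hz, LinearMap.zero_apply, lp.coeFn_zero, mul_zero, zero_mul, add_zero]
end

section
/- Let τ be a nonempty set, p ∈ [1,∞], and φ : τ → τ such that there exists N ∈ ℕ with card(φ⁻¹({α})) ≤ N for all α ∈ τ. Let {d_n}_{n≥0} be a sequence of continuous linear operators on ℓ^p(τ) that is a higher derivation, i.e., d_n(xy) = Σ_{i+j=n} d_i(x)·d_j(y) for all x, y ∈ ℓ^p(τ) and all n ≥ 0, and suppose d₀ = σ_φ↾ℓ^p(τ). Then d_n = 0 for every n ≥ 1. -/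
open scoped ENNReal

lemma sum_antidiagonal_ends {M : Type*} [AddCommMonoid M] (n : ℕ) (hn : 1 ≤ n)
    (f : ℕ → ℕ → M) (h : ∀ i j, i + j = n → 1 ≤ i → 1 ≤ j → f i j = 0) :
    ∑ ij ∈ Finset.HasAntidiagonal.antidiagonal n, f ij.1 ij.2 = f 0 n + f n 0 := by
  have hsub : ({(0, n), (n, 0)} : Finset (ℕ × ℕ)) ⊆ Finset.HasAntidiagonal.antidiagonal n := by
    intro ij hij
    simp only [Finset.mem_insert, Finset.mem_singleton] at hij
    rcases hij with rfl | rfl <;> simp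
  rw [← Finset.sum_subset hsub, Finset.sum_pair (by
    intro h'; apply_fun Prod.fst at h'; simp at h'; omega)]
  intro ij hij hij'
  simp only [Finset.mem_insert, Finset.mem_singleton, not_or] at hij'
  rw [Finset.HasAntidiagonal.mem_antidiagonal] at hij
  have h1 : 1 ≤ ij.1 := by
    rcases Nat.eq_zero_or_pos ij.1 with h0 | h0
    · exact absurd (by rw [Prod.ext_iff]; omega) hij'.1
    · exact h0
  have h2 : 1 ≤ ij.2 := by
    rcases Nat.eq_zero_or_pos ij.2 with h0 | h0
    · exact absurd (by rw [Prod.ext_iff]; omega) hij'.2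
    · exact h0
  exact h ij.1 ij.2 hij h1 h2

/-- If `(d_n)_{n ≥ 0}` is a higher derivation consisting of continuous linear operators
on `ℓ^p(τ)` (i.e. `d_n(xy) = Σ_{i+j=n} d_i(x)·d_j(y)`) with `d_0 = σ_φ↾ℓ^p(τ)`, then
`d_n = 0` for all `n ≥ 1`. -/
theorem stmt_17 (τ : Type*) [Nonempty τ] (p : ℝ≥0∞) [Fact (1 ≤ p)]
    (φ : τ → τ) (N : ℕ) (hφ : ∀ α : τ, (φ ⁻¹' {α}).encard ≤ N)
    (S : lp (fun _ : τ => ℂ) p →L[ℂ] lp (fun _ : τ => ℂ) p)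
    (hS : ∀ x : lp (fun _ : τ => ℂ) p, ∀ α : τ, S x α = x (φ α))
    (d : ℕ → (lp (fun _ : τ => ℂ) p →L[ℂ] lp (fun _ : τ => ℂ) p))
    (hd0 : d 0 = S)
    (hhigher : ∀ n : ℕ, ∀ x y z : lp (fun _ : τ => ℂ) p, (⇑z = ⇑x * ⇑y) →
      ⇑(d n z) = ∑ ij ∈ Finset.HasAntidiagonal.antidiagonal n, ⇑(d ij.1 x) * ⇑(d ij.2 y)) :
    ∀ n : ℕ, 1 ≤ n → d n = 0 := by
  classical
  intro n
  induction n using Nat.strong_induction_on with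
  | _ n IH =>
  intro hn
  have key : ∀ α : τ, ⇑(d n ((lp.single p α 1 : lp (fun _ : τ => ℂ) p))) = 0 := by
    intro α
    set e := (lp.single p α 1 : lp (fun _ : τ => ℂ) p) with he_def
    have hee : ⇑e = ⇑e * ⇑e := by
      funext β
      by_cases h : β = α
      · subst h; simp [he_def, lp.single_apply_self]
      · simp [he_def, lp.single_apply_ne p α _ h, Pi.single_apply, h]
    have h1 := hhigher n e e e hee
    have h2 := sum_antidiagonal_ends n hn (fun i j => (⇑(d i e) * ⇑(d j e) : τ → ℂ))
      (fun i j hij hi hj => by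
        have hzero : d i = 0 := IH i (by omega) hi
        simp [hzero]
        funext t
        exact zero_mul _)
    simp only at h2
    rw [h2, hd0] at h1
    funext β
    have hβ := congrFun h1 β
    simp only [Pi.add_apply, Pi.mul_apply, Pi.zero_apply] at hβ ⊢
    rw [hS] at hβ
    by_cases hc : φ β = α
    · rw [hc, lp.single_apply_self] at hβ
      linear_combination -hβ
    · rw [lp.single_apply_ne p α _ hc] at hβ
      linear_combination hβ
  have keyx : ∀ x : lp (fun _ : τ => ℂ) p, ⇑(d n x) = 0 := by
    intro x
    funext β
    set α := φ β with hα
    set e := (lp.single p α 1 : lp (fun _ : τ => ℂ) p) with he_def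
    have hz : ⇑(x α • e) = ⇑x * ⇑e := by
      funext γ
      by_cases h : γ = α
      · subst h
        simp [he_def, lp.single_apply_self, lp.coeFn_smul, Pi.smul_apply]
      · simp [he_def, lp.single_apply_ne p α _ h, lp.coeFn_smul, Pi.smul_apply, Pi.single_apply, h]
    have h1 := hhigher n x e (x α • e) hz
    have h2 := sum_antidiagonal_ends n hn (fun i j => (⇑(d i x) * ⇑(d j e) : τ → ℂ))
      (fun i j hij hi hj => by
        have hzero : d i = 0 := IH i (by omega) hi
        simp [hzero]
        funext t
        exact zero_mul _)
    simp only at h2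
    rw [h2, hd0, key α] at h1
    have hL : ⇑(d n (x α • e)) = 0 := by
      rw [map_smul, lp.coeFn_smul, key α, smul_zero]
    rw [hL] at h1
    have hβ := (congrFun h1 β).symm
    simp only [Pi.add_apply, Pi.mul_apply, Pi.zero_apply, mul_zero, zero_add] at hβ
    rw [hS, ← hα, he_def, lp.single_apply_self, mul_one] at hβ
    exact hβ
  ext x β
  rw [keyx x]
  simp
end

section
/- Let τ be a nonempty set, p ∈ [1,∞], and φ : τ → τ such that there exists N ∈ ℕ with card(φ⁻¹({α})) ≤ N for all α ∈ τ. Let {d_n}_{n≥0} be a sequence of continuous linear operators on ℓ^p(τ) that is a Jordan higher derivation, i.e., d_n(x²) = Σ_{i+j=n} d_i(x)·d_j(x) for all x ∈ ℓ^p(τ) and all n ≥ 0, and suppose d₀ = σ_φ↾ℓ^p(τ). Then d_n = 0 for every n ≥ 1. -/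
open scoped ENNReal

private lemma sq_memℓp {τ : Type*} [Nonempty τ] {p : ℝ≥0∞} [Fact (1 ≤ p)]
    (f g : lp (fun _ : τ => ℂ) p) : Memℓp (⇑f * ⇑g) p := by
  rcases eq_or_ne p ∞ with hp | hp
  · subst hp
    exact (lp.memℓp f).infty_mul (lp.memℓp g)
  · have hr : 0 < p.toReal := ENNReal.toReal_pos (by
      have h1 : (1:ℝ≥0∞) ≤ p := Fact.out
      exact fun h => by simp [h] at h1) hp
    have hinf : Memℓp (⇑g) ∞ := (lp.memℓp g).of_exponent_ge le_top
    obtain ⟨C, hC⟩ := hinf.bddAbove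
    have hC' : ∀ i, ‖g i‖ ≤ C := fun i => hC ⟨i, rfl⟩
    have hC0 : 0 ≤ C := le_trans (norm_nonneg _) (hC' (Classical.arbitrary τ))
    apply memℓp_gen
    have hsum := ((lp.memℓp f).summable hr).mul_right (C ^ p.toReal)
    refine Summable.of_nonneg_of_le (fun i => ?_) (fun i => ?_) hsum
    · positivity
    · have h2 : ‖(⇑f * ⇑g) i‖ = ‖f i‖ * ‖g i‖ := by
        simp [Pi.mul_apply]
      rw [h2, Real.mul_rpow (norm_nonneg _) (norm_nonneg _)]
      exact mul_le_mul_of_nonneg_left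
        (Real.rpow_le_rpow (norm_nonneg _) (hC' i) (le_of_lt hr)) (by positivity)

/-- If `(d_n)_{n ≥ 0}` is a Jordan higher derivation consisting of continuous linear
operators on `ℓ^p(τ)` (i.e. `d_n(x²) = Σ_{i+j=n} d_i(x)·d_j(x)`) with
`d_0 = σ_φ↾ℓ^p(τ)`, then `d_n = 0` for all `n ≥ 1`. -/
theorem stmt_18 (τ : Type*) [Nonempty τ] (p : ℝ≥0∞) [Fact (1 ≤ p)]
    (φ : τ → τ) (N : ℕ) (hφ : ∀ α : τ, (φ ⁻¹' {α}).encard ≤ N)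
    (S : lp (fun _ : τ => ℂ) p →L[ℂ] lp (fun _ : τ => ℂ) p)
    (hS : ∀ x : lp (fun _ : τ => ℂ) p, ∀ α : τ, S x α = x (φ α))
    (d : ℕ → (lp (fun _ : τ => ℂ) p →L[ℂ] lp (fun _ : τ => ℂ) p))
    (hd0 : d 0 = S)
    (hhigher : ∀ n : ℕ, ∀ x z : lp (fun _ : τ => ℂ) p, (⇑z = ⇑x * ⇑x) →
      ⇑(d n z) = ∑ ij ∈ Finset.HasAntidiagonal.antidiagonal n, ⇑(d ij.1 x) * ⇑(d ij.2 x)) :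
    ∀ n : ℕ, 1 ≤ n → d n = 0 := by
  classical
  intro n
  induction n using Nat.strong_induction_on with
  | _ n IH =>
  intro hn
  -- key pointwise identity
  have hkey : ∀ x z : lp (fun _ : τ => ℂ) p, (⇑z = ⇑x * ⇑x) →
      ∀ α : τ, (d n z) α = 2 * x (φ α) * (d n x) α := by
    intro x z hz α
    have h1 := congrFun (hhigher n x z hz) α
    have h2 : ∑ ij ∈ Finset.HasAntidiagonal.antidiagonal n, ⇑(d ij.1 x) * ⇑(d ij.2 x)
        = ∑ ij ∈ ({(0,n),(n,0)} : Finset (ℕ × ℕ)), ⇑(d ij.1 x) * ⇑(d ij.2 x) := by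
      symm
      apply Finset.sum_subset
      · intro ij hij
        simp only [Finset.mem_insert, Finset.mem_singleton] at hij
        rcases hij with rfl | rfl <;> simp [Finset.mem_antidiagonal]
      · rintro ⟨i, j⟩ hij hij'
        simp only [Finset.HasAntidiagonal.mem_antidiagonal] at hij
        simp only [Finset.mem_insert, Finset.mem_singleton, Prod.mk.injEq, not_or,
          not_and] at hij'
        have hI : d i = 0 := IH i (by omega) (by omega)
        rw [hI, ContinuousLinearMap.zero_apply, lp.coeFn_zero, zero_mul]
      done
    rw [h2] at h1
    have hpair : ((0,n) : ℕ × ℕ) ≠ (n,0) := by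
      simp only [ne_eq, Prod.mk.injEq]
      omega
    rw [Finset.sum_pair hpair] at h1
    simp only [Pi.add_apply, Pi.mul_apply, hd0, hS] at h1
    rw [h1]; ring
  -- main argument
  apply ContinuousLinearMap.ext
  intro x
  apply lp.ext
  funext α
  show (d n x) α = (0 : lp (fun _ : τ => ℂ) p) α
  set e : lp (fun _ : τ => ℂ) p := lp.single p (φ α) (1 : ℂ) with he
  set a : ℂ := x (φ α) with ha
  have hzp := sq_memℓp (x + e) (x + e)
  have hzm := sq_memℓp (x - e) (x - e)
  set zp : lp (fun _ : τ => ℂ) p := ⟨_, hzp⟩ with hzp'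
  set zm : lp (fun _ : τ => ℂ) p := ⟨_, hzm⟩ with hzm'
  have hcp : ⇑zp = ⇑(x + e) * ⇑(x + e) := rfl
  have hcm : ⇑zm = ⇑(x - e) * ⇑(x - e) := rfl
  have hA := hkey (x + e) zp hcp α
  have hB := hkey (x - e) zm hcm α
  -- zp - zm = (4 * a) • e
  have hdiff : zp - zm = (4 * a) • e := by
    refine lp.ext (funext fun β => ?_)
    have h1 : (zp - zm) β = zp β - zm β := by
      rw [lp.coeFn_sub]; rfl
    have h2 : ((4 * a) • e) β = (4 * a) * e β := by
      rw [lp.coeFn_smul]; rfl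
    rw [h1, h2, hcp, hcm]
    simp only [Pi.mul_apply, lp.coeFn_add, lp.coeFn_sub, Pi.add_apply, Pi.sub_apply]
    rcases eq_or_ne β (φ α) with hb | hb
    · subst hb
      rw [he, lp.single_apply_self, ha]
      ring
    · rw [he, lp.single_apply_ne p _ _ hb]
      ring
  have hD : (d n zp) α - (d n zm) α = (4 * a) * (d n e) α := by
    have h3 : d n zp - d n zm = (4 * a) • d n e := by
      rw [← map_sub, hdiff, map_smul]
    calc (d n zp) α - (d n zm) α = (d n zp - d n zm) α := by rw [lp.coeFn_sub]; rfl
      _ = ((4 * a) • d n e) α := by rw [h3]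
      _ = (4 * a) * (d n e) α := by rw [lp.coeFn_smul]; rfl
  have hxe1 : (x + e) (φ α) = a + 1 := by
    rw [lp.coeFn_add]
    simp only [Pi.add_apply, he]
    rw [lp.single_apply_self, ha]
  have hxe2 : (x - e) (φ α) = a - 1 := by
    rw [lp.coeFn_sub]
    simp only [Pi.sub_apply, he]
    rw [lp.single_apply_self, ha]
  have hde1 : (d n (x + e)) α = (d n x) α + (d n e) α := by
    rw [map_add, lp.coeFn_add]; rfl
  have hde2 : (d n (x - e)) α = (d n x) α - (d n e) α := by
    rw [map_sub, lp.coeFn_sub]; rfl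
  rw [hA, hB, hxe1, hxe2, hde1, hde2] at hD
  have hfinal : (4 : ℂ) * (d n x) α = 0 := by linear_combination hD
  have hX : (d n x) α = 0 := by
    have h4 : (4 : ℂ) ≠ 0 := by norm_num
    exact (mul_eq_zero.mp hfinal).resolve_left h4
  simpa using hX
end
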